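/- The polynomial x^4 − x^3 − 2x^2 + 1 has a unique root χ in the interval (1, 2), χ ≈ 1.9052, and all other complex roots of this polynomial have modulus strictly less than 1; hence χ is a Pisot number. -/

import Mathlib

open Set

theorem chi_pisot :
    ∃ χ : ℝ, 1 < χ ∧ χ < 2 ∧ χ ^ 4 - χ ^ 3 - 2 * χ ^ 2 + 1 = 0 ∧
      (∀ y : ℝ, 1 < y → y < 2 → y ^ 4 - y ^ 3 - 2 * y ^ 2 + 1 = 0 → y = χ) ∧
      (∀ z : ℂ, z ^ 4 - z ^ 3 - 2 * z ^ 2 + 1 = 0 → z ≠ (χ : ℂ) →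
        ‖z‖ < 1) := by
  -- the Pisot root
  obtain ⟨a, ⟨ha1, ha2⟩, ha0⟩ :
      ∃ a : ℝ, a ∈ Icc (1.90:ℝ) 1.91 ∧ a ^ 4 - a ^ 3 - 2 * a ^ 2 + 1 = 0 := by
    have hc : ContinuousOn (fun x : ℝ => x ^ 4 - x ^ 3 - 2 * x ^ 2 + 1)
        (Icc (1.90:ℝ) 1.91) := by fun_prop
    have h := intermediate_value_Icc (by norm_num : (1.90:ℝ) ≤ 1.91) hc
    have h0 : (0:ℝ) ∈ Icc ((1.90:ℝ) ^ 4 - 1.90 ^ 3 - 2 * 1.90 ^ 2 + 1)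
        ((1.91:ℝ) ^ 4 - 1.91 ^ 3 - 2 * 1.91 ^ 2 + 1) := by
      constructor <;> norm_num
    obtain ⟨a, ha, ha0⟩ := h h0
    exact ⟨a, ha, ha0⟩
  -- the other real root
  obtain ⟨b, ⟨hb1, hb2⟩, hb0⟩ :
      ∃ b : ℝ, b ∈ Icc (0.66:ℝ) 0.68 ∧ b ^ 4 - b ^ 3 - 2 * b ^ 2 + 1 = 0 := by
    have hc : ContinuousOn (fun x : ℝ => x ^ 4 - x ^ 3 - 2 * x ^ 2 + 1)
        (Icc (0.66:ℝ) 0.68) := by fun_prop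
    have h := intermediate_value_Icc' (by norm_num : (0.66:ℝ) ≤ 0.68) hc
    have h0 : (0:ℝ) ∈ Icc ((0.68:ℝ) ^ 4 - 0.68 ^ 3 - 2 * 0.68 ^ 2 + 1)
        ((0.66:ℝ) ^ 4 - 0.66 ^ 3 - 2 * 0.66 ^ 2 + 1) := by
      constructor <;> norm_num
    obtain ⟨b, hb, hb0⟩ := h h0
    exact ⟨b, hb, hb0⟩
  have hab : a - b ≠ 0 := by intro h; nlinarith
  refine ⟨a, by linarith, by linarith, ha0, ?_, ?_⟩
  · -- uniqueness in (1,2)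
    intro y hy1 hy2 hy0
    have key : (y - a) * (y^3 + y^2*a + y*a^2 + a^3 - y^2 - y*a - a^2 - 2*y - 2*a) = 0 := by
      linear_combination hy0 - ha0
    have hH : y^3 + y^2*a + y*a^2 + a^3 - y^2 - y*a - a^2 - 2*y - 2*a > 0 := by nlinarith
    rcases mul_eq_zero.mp key with h | h
    · linarith [sub_eq_zero.mp h]
    · linarith
  · -- complex roots
    intro z hz hzne
    -- key symmetric identities
    have key1 : a*b*(a+b-1) - (a+b)*((a+b)^2 - (a+b) - a*b - 2) = 0 := by
      have h : (a - b) * (a*b*(a+b-1) - (a+b)*((a+b)^2 - (a+b) - a*b - 2)) = 0 := by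
        linear_combination hb0 - ha0
      rcases mul_eq_zero.mp h with h | h
      · exact absurd h hab
      · exact h
    have key2 : a*b*((a+b)^2 - (a+b) - a*b - 2) - 1 = 0 := by
      have h : (a - b) * (a*b*((a+b)^2 - (a+b) - a*b - 2) - 1) = 0 := by
        linear_combination b * ha0 - a * hb0
      rcases mul_eq_zero.mp h with h | h
      · exact absurd h hab
      · exact h
    have c1 : (a:ℂ)*b*((a:ℂ)+b-1) - ((a:ℂ)+b)*(((a:ℂ)+b)^2 - ((a:ℂ)+b) - (a:ℂ)*b - 2) = 0 := by
      exact_mod_cast congrArg (Complex.ofReal) key1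
    have c2 : (a:ℂ)*b*(((a:ℂ)+b)^2 - ((a:ℂ)+b) - (a:ℂ)*b - 2) - 1 = 0 := by
      exact_mod_cast congrArg (Complex.ofReal) key2
    -- bounds for quadratic factor
    have hm1 : (1.254:ℝ) ≤ a*b := by nlinarith
    have hm2 : a*b ≤ (1.2988:ℝ) := by nlinarith
    have hqlt : (a+b)^2 - (a+b) - a*b - 2 < 1 := by nlinarith
    have hdisc : (a+b-1)^2 < 4*((a+b)^2 - (a+b) - a*b - 2) := by nlinarith
    -- factorization over ℂ
    have hfac : (z - (a:ℂ)) * (z - (b:ℂ)) *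
        (z^2 + (((a+b-1 : ℝ)):ℂ)*z + (((a+b)^2 - (a+b) - a*b - 2 : ℝ):ℂ)) = 0 := by
      push_cast
      linear_combination hz + z * c1 + c2
    rcases mul_eq_zero.mp hfac with h | hquad
    · rcases mul_eq_zero.mp h with h | h
      · exact absurd (sub_eq_zero.mp h) hzne
      · -- z = b
        rw [sub_eq_zero.mp h, Complex.norm_real, Real.norm_eq_abs, abs_of_pos (by linarith)]
        linarith
    · -- quadratic case
      set P : ℝ := a + b - 1 with hP
      set Q : ℝ := (a+b)^2 - (a+b) - a*b - 2 with hQ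
      rw [Complex.ext_iff] at hquad
      obtain ⟨hre, him⟩ := hquad
      simp only [Complex.add_re, Complex.add_im, Complex.mul_re, Complex.mul_im,
        Complex.ofReal_re, Complex.ofReal_im, Complex.zero_re, Complex.zero_im, pow_two] at hre him
      set x := z.re
      set y := z.im
      have hre' : x^2 - y^2 + P*x + Q = 0 := by rw [pow_two, pow_two]; linarith [hre]
      have him' : 2*x*y + P*y = 0 := by linarith [him]
      have hnorm : x^2 + y^2 < 1 := by
        rcases eq_or_ne y 0 with hy | hy
        · exfalso
          rw [hy] at hre'
          nlinarith [sq_nonneg (2*x + P)]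
        · have h2xp : 2*x + P = 0 := by
            rcases mul_eq_zero.mp (show y * (2*x + P) = 0 by linarith [him']) with h | h
            · exact absurd h hy
            · exact h
          have hx : x = -P/2 := by linarith
          have hy2 : y^2 = Q - P^2/4 := by linear_combination (x + P/2) * hx - hre'
          have hxy : x^2 + y^2 = Q := by linear_combination hy2 + (x - P/2) * hx
          linarith [hxy, hqlt]
      have habs : ‖z‖ ^ 2 = x^2 + y^2 := by
        rw [Complex.sq_norm, Complex.normSq_apply]; ring
      have h1 : ‖z‖ ^ 2 < 1 := by rw [habs]; exact hnorm
      exact lt_of_pow_lt_pow_left₀ 2 zero_le_one (by rw [one_pow]; exact h1)
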